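/- Let p ≥ 2 be an integer and let α ≥ 0. The functional F^p_{m,α} is bounded below on R^p if and only if χ ≤ C_p; moreover, when χ ≤ C_p one has F^p_{m,α}(X) ≥ 0 for all X ∈ R^p. -/

import Mathlib

open scoped BigOperators
noncomputable section

/-- Internal (diffusion) part: sum of (X_{i+1} - X_i)^(1-m) over consecutive gaps. -/
def gapSum (m : ℝ) (p : ℕ) (X : EuclideanSpace ℝ (Fin p)) : ℝ :=
  ∑ i : Fin p, if h : (i : ℕ) + 1 < p then (X ⟨(i : ℕ) + 1, h⟩ - X i) ^ (1 - m) else 0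

/-- Interaction part: sum of |X_i - X_j|^(1-m) over ordered pairs i ≠ j. -/
def pairSum (m : ℝ) (p : ℕ) (X : EuclideanSpace ℝ (Fin p)) : ℝ :=
  ∑ i : Fin p, ∑ j : Fin p, if i ≠ j then |X i - X j| ^ (1 - m) else 0

/-- The discrete free energy F^p_m. -/
def FF (m χ : ℝ) (p : ℕ) (X : EuclideanSpace ℝ (Fin p)) : ℝ :=
  (m - 1)⁻¹ * gapSum m p X - (χ / (m - 1)) * pairSum m p X

/-- Membership in R^p: strictly increasing with zero mean. -/
def memR (p : ℕ) (X : EuclideanSpace ℝ (Fin p)) : Prop :=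
  (StrictMono fun i => X i) ∧ ∑ i, X i = 0

/-- The critical constant C_p, with 1/C_p the sup of the HLS ratio. -/
def Cp (m : ℝ) (p : ℕ) : ℝ :=
  (sSup {r : ℝ | ∃ X : EuclideanSpace ℝ (Fin p), memR p X ∧
    r = pairSum m p X / gapSum m p X})⁻¹

/-- The functional F^p_{m,α} with confining quadratic potential. -/
def FFa (m χ α : ℝ) (p : ℕ) (X : EuclideanSpace ℝ (Fin p)) : ℝ :=
  FF m χ p X + α / 2 * ‖X‖ ^ 2

/-- H^N_{m+1}(Y) = |∇F^N_m(Y)|² − ((m−1) F^N_m(Y))². -/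
def Hfun (m χ : ℝ) (N : ℕ) (Y : EuclideanSpace ℝ (Fin N)) : ℝ :=
  ‖gradient (FF m χ N) Y‖ ^ 2 - ((m - 1) * FF m χ N Y) ^ 2

/-- X : [0,T) → R^N is a solution of the gradient flow of F^N_m. -/
def isGFlow (m χ : ℝ) (N : ℕ) (T : ℝ) (X : ℝ → EuclideanSpace ℝ (Fin N)) : Prop :=
  ∀ t ∈ Set.Ico (0 : ℝ) T, memR N (X t) ∧
    HasDerivWithinAt X (-(gradient (FF m χ N) (X t))) (Set.Ico (0 : ℝ) T) t

/-- The gap Y_{i+1} - Y_i (0 if i+1 is out of range). -/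
def gapAt (N : ℕ) (Y : EuclideanSpace ℝ (Fin N)) (i : ℕ) : ℝ :=
  if h : i + 1 < N then Y ⟨i + 1, h⟩ - Y ⟨i, Nat.lt_of_succ_lt h⟩ else 0

section Aux
variable {m : ℝ} {p : ℕ} {X : EuclideanSpace ℝ (Fin p)}

lemma gapSum_term_nonneg (hX : StrictMono fun i => X i) (i : Fin p) :
    0 ≤ if h : (i : ℕ) + 1 < p then (X ⟨(i : ℕ) + 1, h⟩ - X i) ^ (1 - m) else 0 := by
  split
  · rename_i h
    have : X i < X ⟨(i : ℕ) + 1, h⟩ := hX (show i < ⟨(i : ℕ) + 1, h⟩ by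
      simp [Fin.lt_def])
    exact Real.rpow_nonneg (by linarith) _
  · exact le_refl _

lemma gapSum_nonneg (hX : StrictMono fun i => X i) : 0 ≤ gapSum m p X :=
  Finset.sum_nonneg fun i _ => gapSum_term_nonneg hX i

lemma gapSum_pos (hp : 2 ≤ p) (hX : StrictMono fun i => X i) : 0 < gapSum m p X := by
  have h0 : (0 : ℕ) < p := by omega
  have h1 : (0 : ℕ) + 1 < p := by omega
  refine Finset.sum_pos' (fun i _ => gapSum_term_nonneg hX i) ⟨⟨0, h0⟩, Finset.mem_univ _, ?_⟩
  rw [dif_pos h1]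
  have : X ⟨0, h0⟩ < X ⟨(0 : ℕ) + 1, h1⟩ := hX (by simp [Fin.lt_def])
  exact Real.rpow_pos_of_pos (by linarith) _

lemma pairSum_nonneg : 0 ≤ pairSum m p X := by
  refine Finset.sum_nonneg fun i _ => Finset.sum_nonneg fun j _ => ?_
  split
  · exact Real.rpow_nonneg (abs_nonneg _) _
  · exact le_refl _

lemma pairSum_pos (hp : 2 ≤ p) (hX : StrictMono fun i => X i) : 0 < pairSum m p X := by
  have h0 : (0 : ℕ) < p := by omega
  have h1 : (1 : ℕ) < p := by omega
  have hlt : X ⟨0, h0⟩ < X ⟨1, h1⟩ := hX (by simp [Fin.lt_def])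
  refine Finset.sum_pos'
    (fun i _ => Finset.sum_nonneg fun j _ => by
      split
      · exact Real.rpow_nonneg (abs_nonneg _) _
      · exact le_refl _) ⟨⟨0, h0⟩, Finset.mem_univ _, ?_⟩
  refine Finset.sum_pos'
    (fun j _ => by
      split
      · exact Real.rpow_nonneg (abs_nonneg _) _
      · exact le_refl _) ⟨⟨1, h1⟩, Finset.mem_univ _, ?_⟩
  rw [if_pos (by simp [Fin.ext_iff])]
  exact Real.rpow_pos_of_pos (by rw [abs_sub_comm]; rw [abs_of_pos (by linarith)]; linarith) _

lemma pair_term_le_gapSum (hm : 1 < m) (hX : StrictMono fun i => X i)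
    {i j : Fin p} (hij : i < j) : |X i - X j| ^ (1 - m) ≤ gapSum m p X := by
  have hij' : (i : ℕ) < (j : ℕ) := hij
  have h : (i : ℕ) + 1 < p := lt_of_le_of_lt (by omega) j.isLt
  have hg : X i < X ⟨(i : ℕ) + 1, h⟩ := hX (by simp [Fin.lt_def])
  have hle : X ⟨(i : ℕ) + 1, h⟩ ≤ X j := hX.monotone (by simp [Fin.le_def]; omega)
  have habs : |X i - X j| = X j - X i := by
    rw [abs_sub_comm, abs_of_pos (by have := hX hij; simpa using by linarith [hX hij])]
  have step1 : |X i - X j| ^ (1 - m) ≤ (X ⟨(i : ℕ) + 1, h⟩ - X i) ^ (1 - m) := by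
    rw [habs]
    exact Real.rpow_le_rpow_of_nonpos (by linarith) (by linarith) (by linarith)
  refine le_trans step1 ?_
  have h5 := Finset.single_le_sum (f := fun i : Fin p =>
    if h : (i : ℕ) + 1 < p then (X ⟨(i : ℕ) + 1, h⟩ - X i) ^ (1 - m) else 0)
    (fun k _ => gapSum_term_nonneg hX k) (Finset.mem_univ i)
  unfold gapSum
  simpa [dif_pos h] using h5

lemma pairSum_le (hm : 1 < m) (hX : StrictMono fun i => X i) :
    pairSum m p X ≤ (p : ℝ) * p * gapSum m p X := by
  have hterm : ∀ i j : Fin p,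
      (if i ≠ j then |X i - X j| ^ (1 - m) else 0) ≤ gapSum m p X := by
    intro i j
    split
    · rename_i hne
      rcases lt_or_gt_of_ne hne with hlt | hlt
      · exact pair_term_le_gapSum hm hX hlt
      · rw [abs_sub_comm]; exact pair_term_le_gapSum hm hX hlt
    · exact gapSum_nonneg hX
  calc pairSum m p X ≤ ∑ _i : Fin p, ∑ _j : Fin p, gapSum m p X := by
        refine Finset.sum_le_sum fun i _ => Finset.sum_le_sum fun j _ => hterm i j
    _ = (p : ℝ) * p * gapSum m p X := by
        simp [Finset.sum_const, Finset.card_univ]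
        ring

lemma memR_smul {lam : ℝ} (hlam : 0 < lam) (hX : memR p X) : memR p (lam • X) := by
  constructor
  · intro i j hij
    have : X i < X j := hX.1 hij
    simpa [PiLp.smul_apply, smul_eq_mul] using mul_lt_mul_of_pos_left this hlam
  · have : ∑ i, (lam • X) i = lam * ∑ i, X i := by
      simp [PiLp.smul_apply, smul_eq_mul, Finset.mul_sum]
    rw [this, hX.2, mul_zero]

lemma gapSum_smul (hX : StrictMono fun i => X i) {lam : ℝ} (hlam : 0 < lam) :
    gapSum m p (lam • X) = lam ^ (1 - m) * gapSum m p X := by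
  unfold gapSum
  rw [Finset.mul_sum]
  refine Finset.sum_congr rfl fun i _ => ?_
  split
  · rename_i h
    have hg : X i < X ⟨(i : ℕ) + 1, h⟩ := hX (by simp [Fin.lt_def])
    have : (lam • X) ⟨(i : ℕ) + 1, h⟩ - (lam • X) i = lam * (X ⟨(i : ℕ) + 1, h⟩ - X i) := by
      simp [PiLp.smul_apply, smul_eq_mul]; ring
    rw [this, Real.mul_rpow hlam.le (by linarith)]
  · rw [mul_zero]

lemma pairSum_smul {lam : ℝ} (hlam : 0 < lam) :
    pairSum m p (lam • X) = lam ^ (1 - m) * pairSum m p X := by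
  unfold pairSum
  rw [Finset.mul_sum]
  refine Finset.sum_congr rfl fun i _ => ?_
  rw [Finset.mul_sum]
  refine Finset.sum_congr rfl fun j _ => ?_
  split
  · have : |(lam • X) i - (lam • X) j| = lam * |X i - X j| := by
      have : (lam • X) i - (lam • X) j = lam * (X i - X j) := by
        simp [PiLp.smul_apply, smul_eq_mul]; ring
      rw [this, abs_mul, abs_of_pos hlam]
    rw [this, Real.mul_rpow hlam.le (abs_nonneg _)]
  · rw [mul_zero]

lemma FF_smul {χ : ℝ} (hX : StrictMono fun i => X i) {lam : ℝ} (hlam : 0 < lam) :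
    FF m χ p (lam • X) = lam ^ (1 - m) * FF m χ p X := by
  unfold FF
  rw [gapSum_smul hX hlam, pairSum_smul hlam]
  ring

end Aux

theorem stmt3 (m χ : ℝ) (hm : 1 < m) (hχ : 0 < χ) (p : ℕ) (hp : 2 ≤ p)
    (α : ℝ) (hα : 0 ≤ α) :
    ((∃ c : ℝ, ∀ X : EuclideanSpace ℝ (Fin p), memR p X → c ≤ FFa m χ α p X) ↔ χ ≤ Cp m p) ∧
    (χ ≤ Cp m p → ∀ X : EuclideanSpace ℝ (Fin p), memR p X → 0 ≤ FFa m χ α p X) := by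
  set S := {r : ℝ | ∃ X : EuclideanSpace ℝ (Fin p), memR p X ∧
    r = pairSum m p X / gapSum m p X} with hS
  -- bounded above
  have hbdd : BddAbove S := by
    refine ⟨(p : ℝ) * p, fun r hr => ?_⟩
    obtain ⟨X, hXR, rfl⟩ := hr
    rw [div_le_iff₀ (gapSum_pos hp hXR.1)]
    exact pairSum_le hm hXR.1
  -- witness
  have hwit : ∃ X : EuclideanSpace ℝ (Fin p), memR p X := by
    refine ⟨WithLp.toLp 2 (fun i : Fin p => ((i : ℕ) : ℝ) - ((p : ℝ) - 1) / 2), ?_, ?_⟩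
    · intro i j hij
      have : (i : ℕ) < (j : ℕ) := hij
      simp only [PiLp.toLp_apply]
      have : ((i : ℕ) : ℝ) < ((j : ℕ) : ℝ) := by exact_mod_cast this
      linarith
    · have hsum : ∑ i : Fin p, ((i : ℕ) : ℝ) = (p : ℝ) * ((p : ℝ) - 1) / 2 := by
        rw [Fin.sum_univ_eq_sum_range (fun i => ((i : ℕ) : ℝ)) p]
        have h2 : ((∑ i ∈ Finset.range p, i) : ℕ) * 2 = p * (p - 1) := Finset.sum_range_id_mul_two p
        have h3 : ((∑ i ∈ Finset.range p, i : ℕ) : ℝ) * 2 = (p : ℝ) * ((p : ℝ) - 1) := by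
          have := congrArg (fun n : ℕ => (n : ℝ)) h2
          push_cast [Nat.cast_sub (by omega : 1 ≤ p)] at this
          convert this using 2 <;> push_cast <;> ring
        have h4 : ∑ i ∈ Finset.range p, ((i : ℕ) : ℝ) = ((∑ i ∈ Finset.range p, i : ℕ) : ℝ) := by
          push_cast; rfl
        rw [h4]; linarith
      simp only [PiLp.toLp_apply, Finset.sum_sub_distrib, hsum, Finset.sum_const, Finset.card_univ,
        Fintype.card_fin, nsmul_eq_mul]
      ring
  obtain ⟨X₀, hX₀⟩ := hwit
  have hne : S.Nonempty := ⟨_, X₀, hX₀, rfl⟩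
  have hr₀pos : 0 < pairSum m p X₀ / gapSum m p X₀ :=
    div_pos (pairSum_pos hp hX₀.1) (gapSum_pos hp hX₀.1)
  have hs : 0 < sSup S := lt_of_lt_of_le hr₀pos (le_csSup hbdd ⟨X₀, hX₀, rfl⟩)
  have hCp : Cp m p = (sSup S)⁻¹ := rfl
  have hm1 : (0 : ℝ) < m - 1 := by linarith
  -- part 2: χ ≤ Cp → nonneg
  have key1 : χ ≤ Cp m p → ∀ X : EuclideanSpace ℝ (Fin p), memR p X → 0 ≤ FFa m χ α p X := by
    intro hχle X hXR
    have hgap := gapSum_pos (m := m) hp hXR.1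
    have hratio : pairSum m p X / gapSum m p X ≤ sSup S := le_csSup hbdd ⟨X, hXR, rfl⟩
    have hpair : pairSum m p X ≤ sSup S * gapSum m p X := by
      rw [div_le_iff₀ hgap] at hratio; exact hratio
    have hχs : χ * sSup S ≤ 1 := by
      rw [hCp] at hχle
      have := mul_le_mul_of_nonneg_right hχle hs.le
      rwa [inv_mul_cancel₀ hs.ne'] at this
    have hkey : χ * pairSum m p X ≤ gapSum m p X := by
      calc χ * pairSum m p X ≤ χ * (sSup S * gapSum m p X) :=
            mul_le_mul_of_nonneg_left hpair hχ.le
        _ = (χ * sSup S) * gapSum m p X := by ring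
        _ ≤ 1 * gapSum m p X := mul_le_mul_of_nonneg_right hχs hgap.le
        _ = gapSum m p X := one_mul _
    have hFF : 0 ≤ FF m χ p X := by
      unfold FF
      have : (m - 1)⁻¹ * gapSum m p X - χ / (m - 1) * pairSum m p X
          = (m - 1)⁻¹ * (gapSum m p X - χ * pairSum m p X) := by
        field_simp
      rw [this]
      exact mul_nonneg (inv_nonneg.mpr hm1.le) (by linarith)
    unfold FFa
    have : 0 ≤ α / 2 * ‖X‖ ^ 2 := by positivity
    linarith
  refine ⟨⟨?_, fun h => ⟨0, key1 h⟩⟩, key1⟩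
  -- part 1 forward: bounded below → χ ≤ Cp
  rintro ⟨c, hc⟩
  by_contra hgt
  push_neg at hgt
  rw [hCp] at hgt
  have hχinv : χ⁻¹ < sSup S := by
    have h1 : 1 < sSup S * χ := by
      have := mul_lt_mul_of_pos_left hgt hs
      rwa [mul_inv_cancel₀ hs.ne'] at this
    have h2 := mul_lt_mul_of_pos_left h1 (inv_pos.mpr hχ)
    rwa [mul_one, show χ⁻¹ * (sSup S * χ) = sSup S * (χ⁻¹ * χ) by ring,
      inv_mul_cancel₀ hχ.ne', mul_one] at h2
  obtain ⟨r, hrS, hr⟩ := exists_lt_of_lt_csSup hne hχinv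
  obtain ⟨X, hXR, rfl⟩ := hrS
  have hgap := gapSum_pos (m := m) hp hXR.1
  have hlt : gapSum m p X < χ * pairSum m p X := by
    rw [lt_div_iff₀ hgap] at hr
    have := mul_lt_mul_of_pos_left hr hχ
    rwa [show χ * (χ⁻¹ * gapSum m p X) = (χ * χ⁻¹) * gapSum m p X by ring,
      mul_inv_cancel₀ hχ.ne', one_mul] at this
  have hFFneg : FF m χ p X < 0 := by
    unfold FF
    have heq : (m - 1)⁻¹ * gapSum m p X - χ / (m - 1) * pairSum m p X
        = (m - 1)⁻¹ * (gapSum m p X - χ * pairSum m p X) := by field_simp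
    rw [heq]
    exact mul_neg_of_pos_of_neg (inv_pos.mpr hm1) (by linarith)
  set A := -FF m χ p X with hA
  have hApos : 0 < A := by simp [hA]; linarith
  set B := α / 2 * ‖X‖ ^ 2 with hB
  have hBpos : 0 ≤ B := by positivity
  set t := max (B - c) 0 + 1 with ht
  have htpos : 0 < t := by positivity
  have htBc : B - c < t := by
    have := le_max_left (B - c) 0
    linarith
  set lam := min 1 ((A / (2 * t)) ^ (1 / (m - 1))) with hlam
  have hbasepos : 0 < A / (2 * t) := div_pos hApos (by linarith)
  have hlampos : 0 < lam := lt_min one_pos (Real.rpow_pos_of_pos hbasepos _)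
  have hlam1 : lam ≤ 1 := min_le_left _ _
  have hlampow : lam ^ (m - 1) ≤ A / (2 * t) := by
    calc lam ^ (m - 1) ≤ ((A / (2 * t)) ^ (1 / (m - 1))) ^ (m - 1) :=
          Real.rpow_le_rpow hlampos.le (min_le_right _ _) hm1.le
      _ = (A / (2 * t)) ^ (1 / (m - 1) * (m - 1)) := by
          rw [← Real.rpow_mul hbasepos.le]
      _ = A / (2 * t) := by
          rw [one_div_mul_cancel hm1.ne', Real.rpow_one]
  have hlampowpos : 0 < lam ^ (m - 1) := Real.rpow_pos_of_pos hlampos _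
  have hlt2 : lam ^ (m - 1) * t < A := by
    have : lam ^ (m - 1) * (2 * t) ≤ A := by
      rw [← le_div_iff₀ (by linarith : (0:ℝ) < 2 * t)]; exact hlampow
    nlinarith
  have hinvA : t < (lam ^ (m - 1))⁻¹ * A := by
    have := mul_lt_mul_of_pos_left hlt2 (inv_pos.mpr hlampowpos)
    rwa [show (lam ^ (m - 1))⁻¹ * (lam ^ (m - 1) * t) = ((lam ^ (m - 1))⁻¹ * lam ^ (m - 1)) * t
      by ring, inv_mul_cancel₀ hlampowpos.ne', one_mul] at this
  have hlamneg : lam ^ (1 - m) = (lam ^ (m - 1))⁻¹ := by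
    rw [show (1 : ℝ) - m = -(m - 1) by ring, Real.rpow_neg hlampos.le]
  -- compute FFa of scaled point
  have hnorm : ‖lam • X‖ ^ 2 = lam ^ 2 * ‖X‖ ^ 2 := by
    rw [norm_smul, Real.norm_eq_abs, abs_of_pos hlampos]; ring
  have hFFa : FFa m χ α p (lam • X) = lam ^ (1 - m) * FF m χ p X + α / 2 * (lam ^ 2 * ‖X‖ ^ 2) := by
    unfold FFa
    rw [FF_smul hXR.1 hlampos, hnorm]
  have hmem : memR p (lam • X) := memR_smul hlampos hXR
  have hge := hc _ hmem
  rw [hFFa] at hge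
  have hlamsq : lam ^ 2 ≤ 1 := pow_le_one₀ hlampos.le hlam1
  have hquad : α / 2 * (lam ^ 2 * ‖X‖ ^ 2) ≤ B := by
    rw [hB]
    have h0 : (0:ℝ) ≤ ‖X‖ ^ 2 := by positivity
    have h1 : lam ^ 2 * ‖X‖ ^ 2 ≤ ‖X‖ ^ 2 := mul_le_of_le_one_left h0 hlamsq
    exact mul_le_mul_of_nonneg_left h1 (by positivity)
  have hFFterm : lam ^ (1 - m) * FF m χ p X < -t := by
    rw [hlamneg]
    have : FF m χ p X = -A := by rw [hA]; ring
    rw [this]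
    have heq : (lam ^ (m - 1))⁻¹ * -A = -((lam ^ (m - 1))⁻¹ * A) := by ring
    rw [heq]
    linarith
  linarith
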